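/- Let m ≥ 2 be even and let d = n if m = 2 and d = 2n if m > 2. For every X ⊆ V(ℤ_m^n) there exists Y ⊆ V(ℤ_m^n) such that Y covers X and |Y| ≤ 4·|N(X)|/d. -/

import Mathlib

open Finset Classical

noncomputable section

/-- The discrete torus `ℤ_m^n`: vertex set `{0,…,m-1}^n`, with `x ~ y` iff they differ by
`±1 (mod m)` in exactly one coordinate. -/
def torus (m n : ℕ) : SimpleGraph (Fin n → ZMod m) :=
  SimpleGraph.fromRel (fun x y => ∃ i, x i = y i + 1 ∧ ∀ j, j ≠ i → x j = y j)

/-- The neighbourhood `N(X)` of a set of vertices: all vertices with a neighbour in `X`. -/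
def nbhd {V : Type*} [Fintype V] (G : SimpleGraph V) (X : Finset V) : Finset V :=
  univ.filter fun v => ∃ x ∈ X, G.Adj x v

/-- `Y` covers `X`: every vertex of `X` has a neighbour in `Y` and every vertex of `Y`
has a neighbour in `X`. -/
def Covers {V : Type*} (G : SimpleGraph V) (Y X : Finset V) : Prop :=
  (∀ x ∈ X, ∃ y ∈ Y, G.Adj x y) ∧ ∀ y ∈ Y, ∃ x ∈ X, G.Adj y x

lemma torus_adj_update (m n : ℕ) (hm2 : 2 ≤ m) (v : Fin n → ZMod m) (i : Fin n) :
    (torus m n).Adj v (Function.update v i (v i + 1)) := by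
  haveI : Fact (1 < m) := ⟨hm2⟩
  have h1 : (1 : ZMod m) ≠ 0 := one_ne_zero
  rw [torus, SimpleGraph.fromRel_adj]
  refine ⟨?_, Or.inr ⟨i, by simp, fun j hj => Function.update_of_ne hj _ _⟩⟩
  intro h
  have h2 := congrFun h i
  rw [Function.update_self] at h2
  exact h1 (left_eq_add.mp h2)

/-- Auxiliary "checksum" function used to build small covers. -/
def sfun (m n b : ℕ) (h2 : (2:ℕ) ∣ m) (a : Fin n → (Fin b → ZMod 2))
    (v : Fin n → ZMod m) : Fin b → ZMod 2 :=
  ∑ i, (ZMod.castHom h2 (ZMod 2) (v i)) • a i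

lemma sfun_update (m n b : ℕ) (h2 : (2:ℕ) ∣ m) (a : Fin n → (Fin b → ZMod 2))
    (v : Fin n → ZMod m) (i : Fin n) :
    sfun m n b h2 a (Function.update v i (v i + 1)) = sfun m n b h2 a v + a i := by
  unfold sfun
  have key : ∀ j : Fin n,
      (ZMod.castHom h2 (ZMod 2) (Function.update v i (v i + 1) j)) • a j
        = (ZMod.castHom h2 (ZMod 2) (v j)) • a j + if j = i then a i else 0 := by
    intro j
    rcases eq_or_ne j i with rfl | h
    · simp [map_add, map_one, add_smul]
    · simp [Function.update_of_ne h, h]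
  rw [Finset.sum_congr rfl (fun j _ => key j), Finset.sum_add_distrib]
  simp

/-- Every `X ⊆ V(ℤ_m^n)` has a cover `Y` with `|Y| ≤ 4|N(X)|/d`, where `d` is the degree
of the torus. -/
theorem torus_small_cover (m n : ℕ) [NeZero m] (hm : Even m) (hm2 : 2 ≤ m) (hn : 1 ≤ n)
    (X : Finset (Fin n → ZMod m)) :
    ∃ Y : Finset (Fin n → ZMod m), Covers (torus m n) Y X ∧
      (Y.card : ℝ) ≤ 4 * ((nbhd (torus m n) X).card : ℝ) /
        ((if m = 2 then n else 2 * n : ℕ) : ℝ) := by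
  classical
  have hn0 : n ≠ 0 := by omega
  set b := Nat.log 2 n with hbdef
  have h2b_le : 2 ^ b ≤ n := Nat.pow_log_le_self 2 hn0
  have h2b_gt : n < 2 ^ (b + 1) := Nat.lt_pow_succ_log_self (by norm_num) n
  have hpos : 0 < 2 ^ b := Nat.pow_pos (by norm_num)
  have hcard : Fintype.card (Fin b → ZMod 2) = 2 ^ b := by
    simp [Fintype.card_fun]
  set eA := Fintype.equivFinOfCardEq hcard with heA
  set a : Fin n → (Fin b → ZMod 2) :=
    fun i => eA.symm ⟨(i : ℕ) % 2 ^ b, Nat.mod_lt _ hpos⟩ with hadef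
  have ha : Function.Surjective a := by
    intro z
    refine ⟨⟨(eA z).val, lt_of_lt_of_le (eA z).isLt h2b_le⟩, ?_⟩
    simp only [hadef]
    have : ((⟨(eA z).val, lt_of_lt_of_le (eA z).isLt h2b_le⟩ : Fin n) : ℕ) % 2 ^ b
        = (eA z).val := Nat.mod_eq_of_lt (eA z).isLt
    rw [show (⟨((⟨(eA z).val, lt_of_lt_of_le (eA z).isLt h2b_le⟩ : Fin n) : ℕ) % 2 ^ b,
        Nat.mod_lt _ hpos⟩ : Fin (2 ^ b)) = eA z by exact Fin.ext this]
    exact eA.symm_apply_apply z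
  have h2 : (2:ℕ) ∣ m := hm.two_dvd
  set s : (Fin n → ZMod m) → (Fin b → ZMod 2) := sfun m n b h2 a with hsdef
  set N := nbhd (torus m n) X with hN
  -- averaging: choose a good fibre
  have hsum : ∑ c : (Fin b → ZMod 2), (N.filter (fun w => s w = c)).card = N.card :=
    (Finset.card_eq_sum_card_fiberwise (fun w _ => Finset.mem_univ (s w))).symm
  have hC : ∃ c, (N.filter (fun w => s w = c)).card * 2 ^ b ≤ N.card := by
    by_contra hcon
    push_neg at hcon
    have h1 : ∀ c ∈ (univ : Finset (Fin b → ZMod 2)),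
        N.card + 1 ≤ (N.filter (fun w => s w = c)).card * 2 ^ b := fun c _ => hcon c
    have h2' := Finset.sum_le_sum h1
    rw [Finset.sum_const, Finset.card_univ, hcard, smul_eq_mul, ← Finset.sum_mul, hsum] at h2'
    nlinarith [hpos]
  obtain ⟨c, hc⟩ := hC
  refine ⟨N.filter (fun w => s w = c), ⟨?_, ?_⟩, ?_⟩
  · -- every x ∈ X has a neighbour in Y
    intro x hx
    obtain ⟨i, hai⟩ := ha (c - s x)
    refine ⟨Function.update x i (x i + 1), ?_, torus_adj_update m n hm2 x i⟩
    rw [Finset.mem_filter]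
    constructor
    · rw [hN]
      simp only [nbhd, Finset.mem_filter, Finset.mem_univ, true_and]
      exact ⟨x, hx, torus_adj_update m n hm2 x i⟩
    · rw [hsdef, sfun_update, ← hsdef, hai]
      abel
  · -- every y ∈ Y has a neighbour in X
    intro y hy
    rw [Finset.mem_filter, hN] at hy
    simp only [nbhd, Finset.mem_filter, Finset.mem_univ, true_and] at hy
    obtain ⟨⟨x, hx, hadj⟩, -⟩ := hy
    exact ⟨x, hx, hadj.symm⟩
  · -- cardinality bound
    set dn : ℕ := if m = 2 then n else 2 * n with hdn
    have hd_pos : 0 < dn := by rw [hdn]; split <;> omega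
    have hd_lt : dn < 4 * 2 ^ b := by
      have hp : 2 ^ (b + 1) = 2 * 2 ^ b := by ring
      have : dn ≤ 2 * n := by rw [hdn]; split <;> omega
      omega
    have hdR : (0:ℝ) < (dn : ℝ) := by exact_mod_cast hd_pos
    rw [le_div_iff₀ hdR]
    have hc' : ((N.filter (fun w => s w = c)).card : ℝ) * (2:ℝ) ^ b ≤ (N.card : ℝ) := by
      exact_mod_cast hc
    have hd' : (dn : ℝ) ≤ 4 * (2:ℝ) ^ b := by
      have : (dn : ℝ) < ((4 * 2 ^ b : ℕ) : ℝ) := by exact_mod_cast hd_lt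
      push_cast at this
      linarith
    have h3 : (0:ℝ) ≤ ((N.filter (fun w => s w = c)).card : ℝ) := Nat.cast_nonneg _
    nlinarith [mul_le_mul_of_nonneg_left hd' h3, hc']
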